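/- Let β > 0, n ≥ 0 an integer, κ_k(x) = β^{k+1} x^k e^{−βx}/k! for 0 ≤ k ≤ n, and let ν : ℝ → ℝ be a bounded continuous function. Define b_k(t) = ∫_{−∞}^{t} κ_k(t−x) ν(x) dx for 0 ≤ k ≤ n. Then each b_k is differentiable and for all t ∈ ℝ: b_0'(t) = β ν(t) − β b_0(t), and b_k'(t) = β b_{k−1}(t) − β b_k(t) for 1 ≤ k ≤ n. -/

import Mathlib

open MeasureTheory Real Set Filter intervalIntegral Finset

lemma expc_integrableOn_Iic {c : ℝ} (hc : 0 < c) (t : ℝ) :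
    IntegrableOn (fun x => Real.exp (c * x)) (Set.Iic t) := by
  have hcont : Continuous fun x : ℝ => Real.exp (c * x) := by fun_prop
  refine integrableOn_Iic_of_intervalIntegral_norm_bounded (Real.exp (c * t) / c) t
    (fun y => hcont.integrableOn_Ioc) tendsto_id ?_
  filter_upwards [eventually_le_atBot t] with y hy
  simp only [id_eq]
  have : (∫ x in y..t, ‖Real.exp (c * x)‖) = ∫ x in y..t, Real.exp (c * x) := by
    simp [Real.norm_eq_abs, abs_of_nonneg (Real.exp_pos _).le]
  rw [this]
  have h1 : (∫ x in y..t, Real.exp (c * x)) = c⁻¹ • ∫ x in c*y..c*t, Real.exp x := by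
    rw [← smul_integral_comp_mul_left (fun x => Real.exp x) c, smul_smul,
      inv_mul_cancel₀ hc.ne', one_smul]
  rw [h1, integral_exp]
  rw [smul_eq_mul]
  rw [div_eq_inv_mul]
  have := Real.exp_pos (c * y)
  have hci : 0 < c⁻¹ := inv_pos.mpr hc
  nlinarith

theorem stmt_13 (β : ℝ) (hβ : 0 < β) (n : ℕ)
    (κ : ℕ → ℝ → ℝ)
    (hκ : ∀ (k : ℕ) (x : ℝ), κ k x = β ^ (k + 1) * x ^ k * Real.exp (-β * x) / (Nat.factorial k))
    (ν : ℝ → ℝ) (hνc : Continuous ν) (hνb : ∃ C : ℝ, ∀ t : ℝ, |ν t| ≤ C)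
    (b : ℕ → ℝ → ℝ)
    (hb : ∀ k : ℕ, k ≤ n → ∀ t : ℝ, b k t = ∫ x in Set.Iic t, κ k (t - x) * ν x) :
    (∀ t : ℝ, HasDerivAt (b 0) (β * ν t - β * b 0 t) t) ∧
    (∀ k : ℕ, 1 ≤ k → k ≤ n → ∀ t : ℝ,
      HasDerivAt (b k) (β * b (k - 1) t - β * b k t) t) := by
  classical
  obtain ⟨C, hC⟩ := hνb
  have hC0 : (0:ℝ) ≤ C := (abs_nonneg _).trans (hC 0)
  set h : ℕ → ℝ → ℝ := fun j x => x ^ j * Real.exp (β * x) * ν x with hh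
  have hhc : ∀ j, Continuous (h j) := by intro j; simp only [hh]; fun_prop
  -- integrability of h j on Iic t
  have hint : ∀ (j : ℕ) (t : ℝ), IntegrableOn (h j) (Set.Iic t) := by
    intro j t
    set K : ℝ := C * ((j.factorial : ℝ) * (2 / β) ^ j + |t| ^ j * Real.exp (β / 2 * t)) with hK
    have hdom : IntegrableOn (fun x => K * Real.exp (β / 2 * x)) (Set.Iic t) :=
      (expc_integrableOn_Iic (by linarith) t).const_mul K
    refine Integrable.mono' hdom ((hhc j).aestronglyMeasurable.restrict) ?_
    refine (ae_restrict_iff' measurableSet_Iic).2 (Filter.Eventually.of_forall fun x hx => ?_)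
    simp only [Set.mem_Iic] at hx
    have key : |x| ^ j * Real.exp (β / 2 * x) ≤
        (j.factorial : ℝ) * (2 / β) ^ j + |t| ^ j * Real.exp (β / 2 * t) := by
      rcases le_or_gt x 0 with hx0 | hx0
      · have h1 : (β / 2 * (-x)) ^ j / (j.factorial : ℝ) ≤ Real.exp (β / 2 * (-x)) :=
          Real.pow_div_factorial_le_exp _ (by nlinarith) j
        have hfac : (0:ℝ) < (j.factorial : ℝ) := by positivity
        have h2 : (β/2)^j * |x| ^ j ≤ (j.factorial : ℝ) * Real.exp (β / 2 * (-x)) := by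
          have e1 : (β / 2 * (-x)) ^ j = (β/2)^j * |x|^j := by
            rw [mul_pow, abs_of_nonpos hx0]
          rw [div_le_iff₀ hfac, e1] at h1
          linarith [h1, mul_comm (Real.exp (β / 2 * (-x))) ((j.factorial : ℝ))]
        have h3 : |x| ^ j * Real.exp (β / 2 * x) ≤ (j.factorial : ℝ) * (2/β)^j := by
          have he : Real.exp (β / 2 * (-x)) * Real.exp (β/2 * x) = 1 := by
            rw [← Real.exp_add]; ring_nf; exact Real.exp_zero
          have hb2 : (0:ℝ) < (β/2)^j := by positivity
          have hep : (0:ℝ) < Real.exp (β/2*x) := Real.exp_pos _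
          have := mul_le_mul_of_nonneg_right h2 hep.le
          rw [mul_assoc ((j.factorial:ℝ)) _ _, he, mul_one] at this
          have h4 : |x| ^ j * Real.exp (β / 2 * x) ≤ (j.factorial : ℝ) / (β/2)^j := by
            rw [le_div_iff₀ hb2]; nlinarith
          calc |x| ^ j * Real.exp (β / 2 * x) ≤ (j.factorial : ℝ) / (β/2)^j := h4
            _ = (j.factorial : ℝ) * (2/β)^j := by
                rw [div_eq_mul_inv, ← inv_pow]; congr 2; rw [inv_div]
        have : (0:ℝ) ≤ |t| ^ j * Real.exp (β / 2 * t) := by positivity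
        linarith
      · have h1 : |x| ^ j ≤ |t| ^ j :=
          pow_le_pow_left₀ (abs_nonneg _) (by rw [abs_of_pos hx0, abs_of_pos (lt_of_lt_of_le hx0 hx)]; exact hx) j
        have h2 : Real.exp (β / 2 * x) ≤ Real.exp (β / 2 * t) :=
          Real.exp_le_exp.2 (by nlinarith)
        have : |x| ^ j * Real.exp (β / 2 * x) ≤ |t| ^ j * Real.exp (β / 2 * t) := by
          have := abs_nonneg x
          nlinarith [pow_nonneg (abs_nonneg x) j, Real.exp_pos (β/2*x)]
        have hf : (0:ℝ) ≤ (j.factorial : ℝ) * (2 / β) ^ j := by positivity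
        linarith
    have hnorm : ‖h j x‖ = |x| ^ j * Real.exp (β * x) * |ν x| := by
      simp only [hh, Real.norm_eq_abs, abs_mul, abs_pow, abs_of_pos (Real.exp_pos _)]
    rw [hnorm]
    have hsplit : Real.exp (β * x) = Real.exp (β/2 * x) * Real.exp (β/2 * x) := by
      rw [← Real.exp_add]; ring_nf
    calc |x| ^ j * Real.exp (β * x) * |ν x|
        ≤ |x| ^ j * Real.exp (β * x) * C := by
          have : (0:ℝ) ≤ |x| ^ j * Real.exp (β * x) := by positivity
          exact mul_le_mul_of_nonneg_left (hC x) this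
      _ = (|x| ^ j * Real.exp (β/2 * x)) * (C * Real.exp (β/2 * x)) := by rw [hsplit]; ring
      _ ≤ ((j.factorial : ℝ) * (2 / β) ^ j + |t| ^ j * Real.exp (β / 2 * t)) * (C * Real.exp (β/2 * x)) := by
          have : (0:ℝ) ≤ C * Real.exp (β/2 * x) := by positivity
          exact mul_le_mul_of_nonneg_right key this
      _ = K * Real.exp (β / 2 * x) := by rw [hK]; ring
  -- the antiderivative functions G j and their derivatives
  set G : ℕ → ℝ → ℝ := fun j t => ∫ x in Set.Iic t, h j x with hG
  have hGd : ∀ (j : ℕ) (t : ℝ), HasDerivAt (G j) (h j t) t := by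
    intro j t
    have key : ∀ u : ℝ, G j u = (∫ x in Set.Iic 0, h j x) + ∫ x in (0:ℝ)..u, h j x := by
      intro u
      rw [← integral_Iic_sub_Iic (hint j 0) (hint j u)]
      simp [hG]
    have hd : HasDerivAt (fun u => (∫ x in Set.Iic 0, h j x) + ∫ x in (0:ℝ)..u, h j x)
        (h j t) t := by
      refine HasDerivAt.const_add _ ?_
      exact intervalIntegral.integral_hasDerivAt_right ((hhc j).intervalIntegrable 0 t)
        ((hhc j).stronglyMeasurable.stronglyMeasurableAtFilter) ((hhc j).continuousAt)
    exact hd.congr_of_eventuallyEq (Filter.Eventually.of_forall key)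
  -- representation of b k
  have hrep : ∀ k, k ≤ n → ∀ t, b k t = β ^ (k+1) / (k.factorial : ℝ) * Real.exp (-(β*t)) *
      ∑ m ∈ Finset.range (k+1), t ^ m * (-1:ℝ) ^ (k-m) * (k.choose m : ℝ) * G (k-m) t := by
    intro k hk t
    rw [hb k hk t]
    have hpt : ∀ x : ℝ, κ k (t - x) * ν x = ∑ m ∈ Finset.range (k+1),
        (β ^ (k+1) / (k.factorial : ℝ) * Real.exp (-(β*t)) *
          (t ^ m * (-1:ℝ)^(k-m) * (k.choose m : ℝ))) * h (k-m) x := by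
      intro x
      have hb1 : (t - x : ℝ) ^ k = ∑ m ∈ Finset.range (k+1),
          t ^ m * ((-1:ℝ)^(k-m) * x^(k-m)) * (k.choose m : ℝ) := by
        rw [sub_eq_add_neg, add_pow]
        refine Finset.sum_congr rfl fun m hm => ?_
        rw [neg_pow]
      rw [hκ, hb1, Finset.mul_sum, Finset.sum_mul, Finset.sum_div, Finset.sum_mul]
      refine Finset.sum_congr rfl fun m hm => ?_
      simp only [hh]
      rw [show -β * (t - x) = β * x + -(β*t) by ring, Real.exp_add]
      ring
    simp only [hpt]
    rw [MeasureTheory.integral_finset_sum _ (fun m _ => ((hint (k-m) t).const_mul _))]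
    rw [Finset.mul_sum]
    refine Finset.sum_congr rfl fun m hm => ?_
    rw [MeasureTheory.integral_const_mul]
    simp only [hG]
    ring
  -- derivative of b k
  have hder : ∀ k, k ≤ n → ∀ t, HasDerivAt (b k)
      (-β * b k t
       + β ^ (k+1) / (k.factorial : ℝ) * Real.exp (-(β*t)) *
          (∑ m ∈ Finset.range (k+1), (m:ℝ) * t ^ (m-1) * (-1:ℝ) ^ (k-m) * (k.choose m : ℝ) * G (k-m) t)
       + β ^ (k+1) / (k.factorial : ℝ) * (t ^ k * ν t) *
          (∑ m ∈ Finset.range (k+1), (-1:ℝ) ^ (k-m) * (k.choose m : ℝ))) t := by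
    intro k hk t
    have hS : HasDerivAt
        (fun u => ∑ m ∈ Finset.range (k+1), u ^ m * (-1:ℝ)^(k-m) * (k.choose m:ℝ) * G (k-m) u)
        (∑ m ∈ Finset.range (k+1), ((m:ℝ) * t^(m-1) * (-1:ℝ)^(k-m) * (k.choose m:ℝ) * G (k-m) t
          + t ^ m * (-1:ℝ)^(k-m) * (k.choose m:ℝ) * h (k-m) t)) t := by
      refine HasDerivAt.fun_sum fun m hm => ?_
      have h1 : HasDerivAt (fun u : ℝ => u ^ m * (-1:ℝ)^(k-m) * (k.choose m:ℝ))
          ((m:ℝ) * t^(m-1) * ((-1:ℝ)^(k-m)) * (k.choose m:ℝ)) t :=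
        ((hasDerivAt_pow m t).mul_const _).mul_const _
      have h2 := h1.mul (hGd (k-m) t)
      exact h2.congr_deriv (by ring)
    have hf : HasDerivAt (fun u : ℝ => -(β*u)) (-β) t := by
      simpa using ((hasDerivAt_id t).const_mul β).fun_neg
    have hexp : HasDerivAt (fun u => Real.exp (-(β*u))) (Real.exp (-(β*t)) * -β) t := hf.exp
    have hprod := (hexp.const_mul (β ^ (k+1) / (k.factorial : ℝ))).mul hS
    refine HasDerivAt.congr_of_eventuallyEq (hprod.congr_deriv ?_)
      (Filter.Eventually.of_forall fun u => hrep k hk u)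
    -- derivative value identity
    rw [Finset.sum_add_distrib]
    have hU : Real.exp (-(β*t)) *
        ∑ m ∈ Finset.range (k+1), t ^ m * (-1:ℝ)^(k-m) * (k.choose m:ℝ) * h (k-m) t
        = (t ^ k * ν t) * ∑ m ∈ Finset.range (k+1), (-1:ℝ)^(k-m) * (k.choose m:ℝ) := by
      rw [Finset.mul_sum, Finset.mul_sum]
      refine Finset.sum_congr rfl fun m hm => ?_
      have hmk : m ≤ k := Nat.lt_succ_iff.mp (Finset.mem_range.mp hm)
      have hpow : t ^ m * t ^ (k - m) = t ^ k := by rw [← pow_add, Nat.add_sub_cancel' hmk]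
      have hee : Real.exp (-(β*t)) * Real.exp (β*t) = 1 := by
        rw [← Real.exp_add]; simp
      calc Real.exp (-(β*t)) * (t ^ m * (-1:ℝ)^(k-m) * (k.choose m:ℝ) * h (k-m) t)
          = (t^m * t^(k-m)) * ν t * ((-1:ℝ)^(k-m) * (k.choose m:ℝ)) *
            (Real.exp (-(β*t)) * Real.exp (β*t)) := by simp only [hh]; ring
        _ = t ^ k * ν t * ((-1:ℝ)^(k-m) * (k.choose m:ℝ)) := by rw [hpow, hee, mul_one]
    have hrepk := hrep k hk t
    linear_combination β * hrepk + (β ^ (k+1) / (k.factorial : ℝ)) * hU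
  constructor
  · intro t
    refine (hder 0 (Nat.zero_le n) t).congr_deriv ?_
    simp [Finset.sum_range_one]
    ring
  · intro k hk1 hkn t
    obtain ⟨K, rfl⟩ : ∃ K, k = K + 1 := ⟨k - 1, (Nat.succ_pred_eq_of_pos hk1).symm⟩
    refine (hder (K+1) hkn t).congr_deriv ?_
    have hW : (∑ m ∈ Finset.range (K+1+1), (-1:ℝ) ^ (K+1-m) * ((K+1).choose m : ℝ)) = 0 := by
      have h0 := add_pow (1:ℝ) (-1) (K+1)
      simp only [one_pow, one_mul, add_neg_cancel, zero_pow, Nat.succ_ne_zero,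
        ne_eq, not_false_iff] at h0
      exact h0.symm
    have hT : (∑ m ∈ Finset.range (K+1+1),
          (m:ℝ) * t ^ (m-1) * (-1:ℝ)^(K+1-m) * (((K+1).choose m):ℝ) * G (K+1-m) t)
        = ((K:ℝ)+1) * ∑ m ∈ Finset.range (K+1),
            t ^ m * (-1:ℝ)^(K-m) * ((K.choose m):ℝ) * G (K-m) t := by
      rw [Finset.sum_range_succ', Finset.mul_sum]
      simp only [Nat.cast_zero, zero_mul, add_zero]
      refine Finset.sum_congr rfl fun i hi => ?_
      have hsub : K + 1 - (i+1) = K - i := by omega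
      have hsub2 : (i+1) - 1 = i := by omega
      rw [hsub, hsub2]
      have hch : ((K:ℝ)+1) * ((K.choose i):ℝ) = (((K+1).choose (i+1)):ℝ) * ((i:ℝ)+1) := by
        exact_mod_cast Nat.add_one_mul_choose_eq K i
      push_cast
      linear_combination (t^i * (-1:ℝ)^(K-i) * G (K-i) t) * hch.symm
    rw [hW, mul_zero, add_zero, hT]
    have hfacne : ((K.factorial : ℝ)) ≠ 0 := by positivity
    have hA : β^(K+1+1)/((((K+1).factorial):ℝ)) * ((K:ℝ)+1)
        = β * (β^(K+1)/((K.factorial):ℝ)) := by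
      rw [Nat.factorial_succ]
      push_cast
      have : ((K:ℝ)+1) ≠ 0 := by positivity
      field_simp
      ring
    have hrepK := hrep K (le_trans (Nat.le_succ K) hkn) t
    simp only [Nat.add_sub_cancel]
    linear_combination (Real.exp (-(β*t)) *
      ∑ m ∈ Finset.range (K+1), t ^ m * (-1:ℝ)^(K-m) * ((K.choose m):ℝ) * G (K-m) t) * hA
      - β * hrepK
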